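/- Let g be a nilpotent real Lie algebra of dimension 2p+1 (p ≥ 1) admitting a contact form. Then g is a one-dimensional central extension of a Lie algebra admitting an affine structure: the canonical projection π : g → g/Z(g) is a surjective Lie algebra morphism whose kernel Z(g) is one-dimensional and central, and the quotient Lie algebra g/Z(g) admits an affine structure. -/

import Mathlib

/-- Auxiliary: a Lie algebra with a nondegenerate closed "symplectic" bilinear form (given as a
map to the dual satisfying the closedness identity) admits an affine structure. -/
theorem affine_of_symplectic_aux {Q : Type*} [LieRing Q] [LieAlgebra ℝ Q]
    [FiniteDimensional ℝ Q]
    (θ : Q →ₗ[ℝ] Module.Dual ℝ Q)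
    (hinj : Function.Injective θ)
    (hclosed : ∀ u v w : Q, θ ⁅u, v⁆ w = θ u ⁅v, w⁆ - θ v ⁅u, w⁆) :
    ∃ D : Q →ₗ[ℝ] Q →ₗ[ℝ] Q,
      (∀ U V, D U V - D V U = ⁅U, V⁆) ∧
      (∀ U V W, D U (D V W) - D V (D U W) = D ⁅U, V⁆ W) := by
  have hsurj : Function.Surjective θ :=
    (LinearMap.injective_iff_surjective_of_finrank_eq_finrank
      Subspace.dual_finrank_eq.symm).mp hinj
  let e : Q ≃ₗ[ℝ] Module.Dual ℝ Q := LinearEquiv.ofBijective θ ⟨hinj, hsurj⟩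
  have hesymm : ∀ x, θ (e.symm x) = x := fun x => e.apply_symm_apply x
  let D : Q →ₗ[ℝ] Q →ₗ[ℝ] Q := LinearMap.mk₂ ℝ
    (fun u v => e.symm (-((θ v) ∘ₗ ((LieAlgebra.ad ℝ Q) u))))
    (by
      intro u₁ u₂ v
      rw [← map_add]
      refine congrArg e.symm ?_
      ext z; simp; ring)
    (by
      intro c u v
      rw [← map_smul]
      refine congrArg e.symm ?_
      ext z; simp)
    (by
      intro u v₁ v₂
      rw [← map_add]
      refine congrArg e.symm ?_
      ext z; simp; ring)
    (by
      intro c u v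
      rw [← map_smul]
      refine congrArg e.symm ?_
      ext z; simp)
  have hkey : ∀ u v z : Q, θ (D u v) z = -(θ v ⁅u, z⁆) := by
    intro u v z
    have h1 : θ (D u v) = -((θ v) ∘ₗ ((LieAlgebra.ad ℝ Q) u)) := hesymm _
    rw [h1]
    simp [LieAlgebra.ad_apply]
  refine ⟨D, ?_, ?_⟩
  · intro U V
    apply hinj
    ext z
    rw [map_sub]
    simp only [LinearMap.sub_apply, hkey, hclosed]
    ring
  · intro U V W
    apply hinj
    ext z
    rw [map_sub]
    simp only [LinearMap.sub_apply, hkey]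
    have hleib : (⁅U, ⁅V, z⁆⁆ : Q) = ⁅⁅U, V⁆, z⁆ + ⁅V, ⁅U, z⁆⁆ := leibniz_lie U V z
    rw [hleib, map_add]
    ring

/-- A nilpotent real Lie algebra of dimension `2p+1` (`p ≥ 1`) admitting a
contact form is a one-dimensional central extension of a Lie algebra admitting an affine
structure: the canonical projection `π : g → g/Z(g)` is a surjective Lie algebra morphism whose
kernel is the one-dimensional center, and `g/Z(g)` admits an affine structure. -/
theorem contact_nilpotent_is_central_extension_of_affine
    (L : Type*) [LieRing L] [LieAlgebra ℝ L] [FiniteDimensional ℝ L]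
    [LieRing.IsNilpotent L]
    (p : ℕ) (hp : 1 ≤ p) (hdim : Module.finrank ℝ L = 2 * p + 1)
    (ω : L →ₗ[ℝ] ℝ) (hω : ω ≠ 0)
    (hcontact : ∀ X : L, ω X = 0 → (∀ Y : L, ω Y = 0 → ω ⁅X, Y⁆ = 0) → X = 0) :
    Module.finrank ℝ (LieAlgebra.center ℝ L) = 1 ∧
    Function.Surjective (LieSubmodule.Quotient.mk' (LieAlgebra.center ℝ L)) ∧
    (∀ X Y : L, LieSubmodule.Quotient.mk' (LieAlgebra.center ℝ L) ⁅X, Y⁆ =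
      ⁅LieSubmodule.Quotient.mk' (LieAlgebra.center ℝ L) X,
       LieSubmodule.Quotient.mk' (LieAlgebra.center ℝ L) Y⁆) ∧
    (∀ X : L, LieSubmodule.Quotient.mk' (LieAlgebra.center ℝ L) X = 0 ↔
      X ∈ LieAlgebra.center ℝ L) ∧
    (∃ D : (L ⧸ LieAlgebra.center ℝ L) →ₗ[ℝ] (L ⧸ LieAlgebra.center ℝ L) →ₗ[ℝ]
        (L ⧸ LieAlgebra.center ℝ L),
      (∀ U V, D U V - D V U = ⁅U, V⁆) ∧
      (∀ U V W, D U (D V W) - D V (D U W) = D ⁅U, V⁆ W)) := by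
  classical
  have hnt : Nontrivial L := by
    refine Module.finrank_pos_iff (R := ℝ).mp ?_
    rw [hdim]; omega
  -- the radical of the 2-form `dω`
  let S : Submodule ℝ L :=
    { carrier := {X | ∀ Y, ω ⁅X, Y⁆ = 0}
      add_mem' := fun {a b} ha hb Y => by rw [add_lie, map_add, ha, hb, add_zero]
      zero_mem' := fun Y => by simp
      smul_mem' := fun c a ha Y => by rw [smul_lie, map_smul, ha, smul_zero] }
  have hmemS : ∀ X : L, X ∈ S ↔ ∀ Y, ω ⁅X, Y⁆ = 0 := fun X => Iff.rfl
  have hcent_mem : ∀ X : L, X ∈ LieAlgebra.center ℝ L ↔ ∀ Y : L, ⁅Y, X⁆ = 0 := by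
    intro X
    exact LieModule.mem_maxTrivSubmodule ℝ L L X
  have hZS : (LieAlgebra.center ℝ L).toSubmodule ≤ S := by
    intro X hX Y
    have h0 : (⁅Y, X⁆ : L) = 0 := (hcent_mem X).mp hX Y
    have h1 : (⁅X, Y⁆ : L) = 0 := by rw [← lie_skew, h0, neg_zero]
    rw [h1, map_zero]
  have hSinj : Function.Injective (ω.domRestrict S) := by
    refine LinearMap.ker_eq_bot.mp ?_
    rw [eq_bot_iff]
    rintro ⟨X, hXS⟩ hX
    simp only [LinearMap.mem_ker, LinearMap.domRestrict_apply] at hX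
    have hX0 : X = 0 := hcontact X hX (fun Y _ => hXS Y)
    simp [Submodule.mem_bot, hX0]
  have hSfr : Module.finrank ℝ S ≤ 1 := by
    simpa using LinearMap.finrank_le_finrank_of_injective hSinj
  haveI := LieAlgebra.non_trivial_center_of_isNilpotent (R := ℝ) (L := L)
  have hZfr : 1 ≤ Module.finrank ℝ (LieAlgebra.center ℝ L) := by
    have h := Module.finrank_pos_iff (R := ℝ) |>.mpr
      (LieAlgebra.non_trivial_center_of_isNilpotent (R := ℝ) (L := L))
    omega
  have hZeq : (LieAlgebra.center ℝ L).toSubmodule = S :=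
    Submodule.eq_of_le_of_finrank_le hZS (le_trans hSfr hZfr)
  have hfr1 : Module.finrank ℝ (LieAlgebra.center ℝ L) = 1 := by
    have h2 : Module.finrank ℝ (LieAlgebra.center ℝ L).toSubmodule ≤ 1 := by
      rw [hZeq]; exact hSfr
    exact le_antisymm h2 hZfr
  have hcent : ∀ X : L, (∀ Y, ω ⁅X, Y⁆ = 0) → X ∈ LieAlgebra.center ℝ L := by
    intro X hX
    have : X ∈ (LieAlgebra.center ℝ L).toSubmodule := by rw [hZeq]; exact hX
    exact this
  -- quotient machinery
  set N := (LieAlgebra.center ℝ L).toSubmodule with hN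
  let b : L →ₗ[ℝ] L →ₗ[ℝ] ℝ := LinearMap.mk₂ ℝ (fun X Y => ω ⁅X, Y⁆)
    (fun X X' Y => by beta_reduce; rw [add_lie, map_add])
    (fun c X Y => by beta_reduce; rw [smul_lie, map_smul])
    (fun X Y Y' => by beta_reduce; rw [lie_add, map_add])
    (fun c X Y => by beta_reduce; rw [lie_smul, map_smul])
  have hbker : ∀ X : L, N ≤ LinearMap.ker (b X) := by
    intro X Y hY
    have h0 : (⁅X, Y⁆ : L) = 0 := (hcent_mem Y).mp hY X
    show ω ⁅X, Y⁆ = 0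
    rw [h0, map_zero]
  let θ₁ : L →ₗ[ℝ] Module.Dual ℝ (L ⧸ LieAlgebra.center ℝ L) :=
    { toFun := fun X => N.liftQ (b X) (hbker X)
      map_add' := by
        intro X X'
        ext q
        obtain ⟨Y, rfl⟩ := Submodule.Quotient.mk_surjective N q
        show ω ⁅X + X', Y⁆ = ω ⁅X, Y⁆ + ω ⁅X', Y⁆
        rw [add_lie, map_add]
      map_smul' := by
        intro c X
        ext q
        obtain ⟨Y, rfl⟩ := Submodule.Quotient.mk_surjective N q
        show ω ⁅c • X, Y⁆ = c • ω ⁅X, Y⁆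
        rw [smul_lie, map_smul] }
  have hθ₁ker : N ≤ LinearMap.ker θ₁ := by
    intro X hX
    simp only [LinearMap.mem_ker]
    ext q
    obtain ⟨Y, rfl⟩ := Submodule.Quotient.mk_surjective N q
    have h0 : (⁅X, Y⁆ : L) = 0 := by
      rw [← lie_skew, (hcent_mem X).mp hX Y, neg_zero]
    show ω ⁅X, Y⁆ = 0
    rw [h0, map_zero]
  let θQ : (L ⧸ LieAlgebra.center ℝ L) →ₗ[ℝ] Module.Dual ℝ (L ⧸ LieAlgebra.center ℝ L) :=
    N.liftQ θ₁ hθ₁ker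
  have hmk : ∀ X : L, LieSubmodule.Quotient.mk' (LieAlgebra.center ℝ L) X =
      Submodule.Quotient.mk (p := N) X := fun X => rfl
  have hθmk : ∀ X Y : L,
      θQ (Submodule.Quotient.mk (p := N) X) (Submodule.Quotient.mk (p := N) Y) = ω ⁅X, Y⁆ := by
    intro X Y
    rfl
  have hsurjmk : Function.Surjective
      (LieSubmodule.Quotient.mk' (LieAlgebra.center ℝ L)) :=
    LieSubmodule.Quotient.surjective_mk' _
  have hbr : ∀ X Y : L, LieSubmodule.Quotient.mk' (LieAlgebra.center ℝ L) ⁅X, Y⁆ =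
      ⁅LieSubmodule.Quotient.mk' (LieAlgebra.center ℝ L) X,
       LieSubmodule.Quotient.mk' (LieAlgebra.center ℝ L) Y⁆ := by
    intro X Y
    exact LieSubmodule.Quotient.mk_bracket _ X Y
  have hker : ∀ X : L, LieSubmodule.Quotient.mk' (LieAlgebra.center ℝ L) X = 0 ↔
      X ∈ LieAlgebra.center ℝ L := by
    intro X
    exact LieSubmodule.Quotient.mk_eq_zero _
  have hθinj : Function.Injective θQ := by
    refine LinearMap.ker_eq_bot.mp ?_
    rw [eq_bot_iff]
    intro q hq
    obtain ⟨X, rfl⟩ := Submodule.Quotient.mk_surjective N q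
    simp only [LinearMap.mem_ker] at hq
    have hX : ∀ Y, ω ⁅X, Y⁆ = 0 := by
      intro Y
      have := LinearMap.congr_fun hq (Submodule.Quotient.mk (p := N) Y)
      rw [hθmk] at this
      simpa using this
    have hXc : X ∈ N := hcent X hX
    simpa [Submodule.mem_bot, Submodule.Quotient.mk_eq_zero] using (hcent_mem X).mp hXc
  have hclosed : ∀ u v w : L ⧸ LieAlgebra.center ℝ L,
      θQ ⁅u, v⁆ w = θQ u ⁅v, w⁆ - θQ v ⁅u, w⁆ := by
    intro u v w
    obtain ⟨X, rfl⟩ := hsurjmk u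
    obtain ⟨Y, rfl⟩ := hsurjmk v
    obtain ⟨W, rfl⟩ := hsurjmk w
    rw [← hbr, ← hbr, ← hbr]
    simp only [hmk, hθmk]
    rw [lie_lie, map_sub]
  haveI : FiniteDimensional ℝ (L ⧸ LieAlgebra.center ℝ L) := by
    exact FiniteDimensional.finiteDimensional_quotient N
  exact ⟨hfr1, hsurjmk, hbr, hker, affine_of_symplectic_aux θQ hθinj hclosed⟩
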